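/- For positive integers m, n ≥ 2, the inequality m^(n-1) * n^(m-1) / C(mn, m+n-1) ≤ C * [(1 - 1/m)^(mn) * (1 + n/m)^m * (1 - 1/n)^(mn) * (1 + m/n)^n] / [(1 - 1/m)^n * (1 - 1/n)^m * (m+n)^(1/2)] holds for some absolute constant C > 0. -/

import Mathlib

open Real

private lemma stmt5_fact_lb (n : ℕ) (hn : 1 ≤ n) :
    Real.sqrt π * (Real.sqrt (2*n) * ((n:ℝ)/Real.exp 1)^n) ≤ (Nat.factorial n : ℝ) := by
  obtain ⟨k, rfl⟩ : ∃ k, n = k + 1 := ⟨n - 1, by omega⟩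
  have h : Real.sqrt π ≤ Stirling.stirlingSeq (k + 1) :=
    Stirling.stirlingSeq'_antitone.le_of_tendsto
      (Stirling.tendsto_stirlingSeq_sqrt_pi.comp (Filter.tendsto_add_atTop_nat 1)) k
  have hpos : (0:ℝ) < Real.sqrt (2*(k+1:ℕ)) * (((k+1:ℕ):ℝ)/Real.exp 1)^(k+1) := by
    positivity
  have := mul_le_mul_of_nonneg_right h hpos.le
  rwa [Stirling.stirlingSeq, div_mul_cancel₀] at this
  exact hpos.ne'

private lemma stmt5_fact_ub (n : ℕ) (hn : 1 ≤ n) :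
    (Nat.factorial n : ℝ) ≤
      (Real.exp 1 / Real.sqrt 2) * (Real.sqrt (2*n) * ((n:ℝ)/Real.exp 1)^n) := by
  obtain ⟨k, rfl⟩ : ∃ k, n = k + 1 := ⟨n - 1, by omega⟩
  have h : Stirling.stirlingSeq (k + 1) ≤ Real.exp 1 / Real.sqrt 2 := by
    simpa [Stirling.stirlingSeq_one] using Stirling.stirlingSeq'_antitone (Nat.zero_le k)
  have hpos : (0:ℝ) < Real.sqrt (2*(k+1:ℕ)) * (((k+1:ℕ):ℝ)/Real.exp 1)^(k+1) := by
    positivity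
  have := mul_le_mul_of_nonneg_right h hpos.le
  rwa [Stirling.stirlingSeq, div_mul_cancel₀] at this
  exact hpos.ne'

set_option maxHeartbeats 2000000 in
private lemma stmt5_ident (a b : ℕ) (u v x y s w : ℝ) (hu : u ≠ 0) (hv : v ≠ 0) (hx : x ≠ 0)
    (hy : y ≠ 0) (hw : w ≠ 0) :
    x^(b+1) * y^(a+1) * (s^(a+b+3) * (u*v)^((a+1)*(b+1))) *
      ((u/x)^(b+2) * (v/y)^(a+2)) * w
    =
    (x/u)^(a+1) * ((y/v)^(b+1) * ((s/w)^(a+b+3) *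
    (((u/x)^((a+2)*(b+2)) * (w/x)^(a+2) * (v/y)^((a+2)*(b+2)) * (w/y)^(b+2)) *
    (x*y)^((a+2)*(b+2))))) := by
  simp only [div_pow, mul_pow]
  field_simp
  ring

private lemma stmt5_exp_bound (a : ℕ) : (((a:ℝ)+2)/((a:ℝ)+1))^(a+1) ≤ Real.exp 1 := by
  have ha : ((a:ℝ)+1) ≠ 0 := by positivity
  have h : ((a:ℝ)+2)/((a:ℝ)+1) = 1 + 1/((a:ℝ)+1) := by field_simp; ring
  rw [h]
  have h2 : 1 + 1/((a:ℝ)+1) ≤ Real.exp (1/((a:ℝ)+1)) := by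
    have := Real.add_one_le_exp (1/((a:ℝ)+1)); linarith
  calc (1 + 1/((a:ℝ)+1))^(a+1) ≤ Real.exp (1/((a:ℝ)+1))^(a+1) :=
        pow_le_pow_left₀ (by positivity) h2 _
    _ = Real.exp ((a+1 : ℕ) * (1/((a:ℝ)+1))) := (Real.exp_nat_mul _ _).symm
    _ = Real.exp 1 := by
        congr 1
        push_cast
        field_simp

set_option maxHeartbeats 4000000 in
theorem stmt_5 :
    ∃ C : ℝ, 0 < C ∧ ∀ m n : ℕ, 2 ≤ m → 2 ≤ n →
      ((m ^ (n - 1) * n ^ (m - 1) : ℕ) : ℝ) / ((m * n).choose (m + n - 1) : ℝ) ≤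
        C * ((1 - 1 / (m : ℝ)) ^ (m * n) * (1 + (n : ℝ) / m) ^ m *
              (1 - 1 / (n : ℝ)) ^ (m * n) * (1 + (m : ℝ) / n) ^ n) /
            ((1 - 1 / (m : ℝ)) ^ n * (1 - 1 / (n : ℝ)) ^ m * Real.sqrt (m + n)) := by
  refine ⟨Real.exp 1 ^ 4, by positivity, ?_⟩
  intro m n hm hn
  obtain ⟨a, rfl⟩ : ∃ a, m = a + 2 := ⟨m - 2, by omega⟩
  obtain ⟨b, rfl⟩ : ∃ b, n = b + 2 := ⟨n - 2, by omega⟩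
  have hmul : (a+2)*(b+2) = a*b + 2*a + 2*b + 4 := by ring
  have harg : (a+2)+(b+2)-1 = a+b+3 := by omega
  have hexp1 : (b+2)-1 = b+1 := by omega
  have hexp2 : (a+2)-1 = a+1 := by omega
  have hsplit : (a+2)*(b+2) = (a+1)*(b+1) + (a+b+3) := by ring
  have hSN : a+b+3 ≤ (a+2)*(b+2) := hsplit ▸ Nat.le_add_left _ _
  have hNS : (a+2)*(b+2) - (a+b+3) = (a+1)*(b+1) := by rw [hsplit, Nat.add_sub_cancel]
  rw [harg, hexp1, hexp2, Nat.cast_choose ℝ hSN, hNS, div_div_eq_mul_div]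
  push_cast
  set A := (a:ℝ) with hA
  set B := (b:ℝ) with hB
  have hA0 : 0 ≤ A := Nat.cast_nonneg a
  have hB0 : 0 ≤ B := Nat.cast_nonneg b
  have e1 : 1 - 1/(A+2) = (A+1)/(A+2) := by field_simp; ring
  have e2 : 1 - 1/(B+2) = (B+1)/(B+2) := by field_simp; ring
  have e3 : 1 + (B+2)/(A+2) = (A+2+(B+2))/(A+2) := by field_simp; try ring
  have e4 : 1 + (A+2)/(B+2) = (A+2+(B+2))/(B+2) := by field_simp; try ring
  rw [e1, e2, e3, e4]
  have hNpos : (0:ℝ) < (Nat.factorial ((a+2)*(b+2)) : ℝ) := by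
    exact_mod_cast Nat.factorial_pos _
  have hDpos : (0:ℝ) < ((A+1)/(A+2))^(b+2) * ((B+1)/(B+2))^(a+2) * Real.sqrt (A+2+(B+2)) := by
    positivity
  rw [div_le_div_iff₀ hNpos hDpos]
  have hSu := stmt5_fact_ub (a+b+3) (by omega)
  have hPu := stmt5_fact_ub ((a+1)*(b+1)) (by omega)
  have hNl := stmt5_fact_lb ((a+2)*(b+2)) (by omega)
  push_cast at hSu hPu hNl
  set E := Real.exp 1 with hE
  have hEpos : 0 < E := Real.exp_pos 1
  calc (A+2)^(b+1) * (B+2)^(a+1) *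
        ((Nat.factorial (a+b+3) : ℝ) * (Nat.factorial ((a+1)*(b+1)) : ℝ)) *
        (((A+1)/(A+2))^(b+2) * ((B+1)/(B+2))^(a+2) * Real.sqrt (A+2+(B+2)))
      ≤ (A+2)^(b+1) * (B+2)^(a+1) *
        (((E/Real.sqrt 2) * (Real.sqrt (2*(A+B+3)) * ((A+B+3)/E)^(a+b+3))) *
         ((E/Real.sqrt 2) * (Real.sqrt (2*((A+1)*(B+1))) * (((A+1)*(B+1))/E)^((a+1)*(b+1))))) *
        (((A+1)/(A+2))^(b+2) * ((B+1)/(B+2))^(a+2) * Real.sqrt (A+2+(B+2))) := by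
        gcongr <;> positivity
    _ ≤ E^4 * (((A+1)/(A+2))^((a+2)*(b+2)) * ((A+2+(B+2))/(A+2))^(a+2) *
          ((B+1)/(B+2))^((a+2)*(b+2)) * ((A+2+(B+2))/(B+2))^(b+2)) *
        (Real.sqrt π * (Real.sqrt (2*((A+2)*(B+2))) * (((A+2)*(B+2))/E)^((a+2)*(b+2)))) := by
        have hwpos : (0:ℝ) < Real.sqrt (A+2+(B+2)) := Real.sqrt_pos.mpr (by positivity)
        have hww : Real.sqrt (A+2+(B+2)) * Real.sqrt (A+2+(B+2)) = A+2+(B+2) :=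
          Real.mul_self_sqrt (by positivity)
        have hpi : (1:ℝ) ≤ Real.sqrt π := by
          rw [show (1:ℝ) = Real.sqrt 1 by simp]
          exact Real.sqrt_le_sqrt (by linarith [Real.pi_gt_three])
        have hs2 : Real.sqrt 2 ≤ 2 := by
          nlinarith [Real.sq_sqrt (by norm_num : (0:ℝ) ≤ 2), Real.sqrt_nonneg 2]
        have hsqrt : E/Real.sqrt 2*(E/Real.sqrt 2) *
            (Real.sqrt (2*(A+B+3)) * Real.sqrt (2*((A+1)*(B+1)))) ≤
            E^2*Real.sqrt π*Real.sqrt (2*((A+2)*(B+2)))*Real.sqrt (A+2+(B+2)) := by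
          have hK : E/Real.sqrt 2*(E/Real.sqrt 2) = E^2/2 := by
            rw [div_mul_div_comm, Real.mul_self_sqrt (by norm_num : (0:ℝ) ≤ 2)]
            ring
          have hs1 : Real.sqrt (2*(A+B+3)) * Real.sqrt (2*((A+1)*(B+1))) =
              Real.sqrt ((2*(A+B+3))*(2*((A+1)*(B+1)))) :=
            (Real.sqrt_mul (by positivity) _).symm
          have hle : (2*(A+B+3))*(2*((A+1)*(B+1))) ≤ (2*((A+2)*(B+2)))*(2*(A+2+(B+2))) := by
            nlinarith [mul_nonneg hA0 hB0, mul_nonneg (mul_nonneg hA0 hB0) hA0,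
              mul_nonneg (mul_nonneg hA0 hB0) hB0]
          have hc : E^2/2*Real.sqrt 2 ≤ E^2*Real.sqrt π := by
            have h1 : E^2/2*Real.sqrt 2 ≤ E^2/2*2 := by gcongr
            have h2 : E^2*1 ≤ E^2*Real.sqrt π := by gcongr
            linarith
          calc E/Real.sqrt 2*(E/Real.sqrt 2) *
              (Real.sqrt (2*(A+B+3)) * Real.sqrt (2*((A+1)*(B+1))))
              = E^2/2 * Real.sqrt ((2*(A+B+3))*(2*((A+1)*(B+1)))) := by rw [hK, hs1]
            _ ≤ E^2/2 * Real.sqrt ((2*((A+2)*(B+2)))*(2*(A+2+(B+2)))) := by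
                gcongr
            _ = E^2/2 * (Real.sqrt (2*((A+2)*(B+2))) * (Real.sqrt 2 * Real.sqrt (A+2+(B+2)))) := by
                rw [Real.sqrt_mul (by positivity : (0:ℝ) ≤ 2*((A+2)*(B+2))),
                  Real.sqrt_mul (by norm_num : (0:ℝ) ≤ 2) (A+2+(B+2))]
            _ = (E^2/2*Real.sqrt 2) * (Real.sqrt (2*((A+2)*(B+2))) * Real.sqrt (A+2+(B+2))) := by
                ring
            _ ≤ (E^2*Real.sqrt π) * (Real.sqrt (2*((A+2)*(B+2))) * Real.sqrt (A+2+(B+2))) := by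
                exact mul_le_mul_of_nonneg_right hc (by positivity)
            _ = E^2*Real.sqrt π*Real.sqrt (2*((A+2)*(B+2)))*Real.sqrt (A+2+(B+2)) := by ring
        have hEN : E^(a+b+3) * E^((a+1)*(b+1)) = E^((a+2)*(b+2)) := by
          rw [← pow_add]; congr 1; ring
        have h1 := stmt5_exp_bound a
        have h2 := stmt5_exp_bound b
        have h3 : ((A+B+3)/(A+2+(B+2)))^(a+b+3) ≤ 1 :=
          pow_le_one₀ (by positivity) (by rw [div_le_one (by positivity)]; linarith)
        have key2 : (A+2)^(b+1) * (B+2)^(a+1) *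
            ((A+B+3)^(a+b+3) * (((A+1)*(B+1))^((a+1)*(b+1)))) *
            (((A+1)/(A+2))^(b+2) * ((B+1)/(B+2))^(a+2)) * (A+2+(B+2)) ≤
            E^2 * ((((A+1)/(A+2))^((a+2)*(b+2)) * ((A+2+(B+2))/(A+2))^(a+2) *
              ((B+1)/(B+2))^((a+2)*(b+2)) * ((A+2+(B+2))/(B+2))^(b+2)) *
              ((A+2)*(B+2))^((a+2)*(b+2))) := by
          rw [stmt5_ident a b (A+1) (B+1) (A+2) (B+2) (A+B+3) (A+2+(B+2))
            (by positivity) (by positivity) (by positivity) (by positivity) (by positivity)]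
          calc ((A+2)/(A+1))^(a+1) * (((B+2)/(B+1))^(b+1) * (((A+B+3)/(A+2+(B+2)))^(a+b+3) *
                ((((A+1)/(A+2))^((a+2)*(b+2)) * ((A+2+(B+2))/(A+2))^(a+2) *
                  ((B+1)/(B+2))^((a+2)*(b+2)) * ((A+2+(B+2))/(B+2))^(b+2)) *
                 ((A+2)*(B+2))^((a+2)*(b+2)))))
              ≤ E * (E * (1 *
                ((((A+1)/(A+2))^((a+2)*(b+2)) * ((A+2+(B+2))/(A+2))^(a+2) *
                  ((B+1)/(B+2))^((a+2)*(b+2)) * ((A+2+(B+2))/(B+2))^(b+2)) *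
                 ((A+2)*(B+2))^((a+2)*(b+2))))) := by
                gcongr <;> first | exact h1 | exact h2 | exact h3 | positivity
            _ = E^2 * ((((A+1)/(A+2))^((a+2)*(b+2)) * ((A+2+(B+2))/(A+2))^(a+2) *
                  ((B+1)/(B+2))^((a+2)*(b+2)) * ((A+2+(B+2))/(B+2))^(b+2)) *
                 ((A+2)*(B+2))^((a+2)*(b+2))) := by ring
        have hpow : (A+2)^(b+1) * (B+2)^(a+1) *
            (((A+B+3)/E)^(a+b+3) * ((((A+1)*(B+1)))/E)^((a+1)*(b+1))) *
            (((A+1)/(A+2))^(b+2) * ((B+1)/(B+2))^(a+2)) * (A+2+(B+2)) ≤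
            E^2 * ((((A+1)/(A+2))^((a+2)*(b+2)) * ((A+2+(B+2))/(A+2))^(a+2) *
              ((B+1)/(B+2))^((a+2)*(b+2)) * ((A+2+(B+2))/(B+2))^(b+2)) *
              (((A+2)*(B+2))/E)^((a+2)*(b+2))) := by
          have heq1 : ((A+B+3)/E)^(a+b+3) * ((((A+1)*(B+1)))/E)^((a+1)*(b+1)) =
              ((A+B+3)^(a+b+3) * ((A+1)*(B+1))^((a+1)*(b+1)))/E^((a+2)*(b+2)) := by
            rw [div_pow, div_pow, div_mul_div_comm, hEN]
          have heq2 : (((A+2)*(B+2))/E)^((a+2)*(b+2)) =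
              ((A+2)*(B+2))^((a+2)*(b+2))/E^((a+2)*(b+2)) := div_pow _ _ _
          rw [heq1, heq2]
          calc (A+2)^(b+1) * (B+2)^(a+1) *
              (((A+B+3)^(a+b+3) * ((A+1)*(B+1))^((a+1)*(b+1)))/E^((a+2)*(b+2))) *
              (((A+1)/(A+2))^(b+2) * ((B+1)/(B+2))^(a+2)) * (A+2+(B+2))
              = ((A+2)^(b+1) * (B+2)^(a+1) *
                ((A+B+3)^(a+b+3) * (((A+1)*(B+1))^((a+1)*(b+1)))) *
                (((A+1)/(A+2))^(b+2) * ((B+1)/(B+2))^(a+2)) * (A+2+(B+2)))/E^((a+2)*(b+2)) := by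
                ring
            _ ≤ (E^2 * ((((A+1)/(A+2))^((a+2)*(b+2)) * ((A+2+(B+2))/(A+2))^(a+2) *
                ((B+1)/(B+2))^((a+2)*(b+2)) * ((A+2+(B+2))/(B+2))^(b+2)) *
                ((A+2)*(B+2))^((a+2)*(b+2))))/E^((a+2)*(b+2)) := by
                gcongr
            _ = E^2 * ((((A+1)/(A+2))^((a+2)*(b+2)) * ((A+2+(B+2))/(A+2))^(a+2) *
                ((B+1)/(B+2))^((a+2)*(b+2)) * ((A+2+(B+2))/(B+2))^(b+2)) *
                (((A+2)*(B+2))^((a+2)*(b+2))/E^((a+2)*(b+2)))) := by ring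
        rw [← mul_le_mul_iff_of_pos_right hwpos]
        calc ((A+2)^(b+1) * (B+2)^(a+1) *
              ((E/Real.sqrt 2 * (Real.sqrt (2*(A+B+3)) * ((A+B+3)/E)^(a+b+3))) *
               (E/Real.sqrt 2 * (Real.sqrt (2*((A+1)*(B+1))) * (((A+1)*(B+1))/E)^((a+1)*(b+1))))) *
              (((A+1)/(A+2))^(b+2) * ((B+1)/(B+2))^(a+2) * Real.sqrt (A+2+(B+2)))) *
              Real.sqrt (A+2+(B+2))
            = (E/Real.sqrt 2*(E/Real.sqrt 2) *
                (Real.sqrt (2*(A+B+3)) * Real.sqrt (2*((A+1)*(B+1))))) *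
              ((A+2)^(b+1) * (B+2)^(a+1) *
                (((A+B+3)/E)^(a+b+3) * ((((A+1)*(B+1)))/E)^((a+1)*(b+1))) *
                (((A+1)/(A+2))^(b+2) * ((B+1)/(B+2))^(a+2)) *
                (Real.sqrt (A+2+(B+2)) * Real.sqrt (A+2+(B+2)))) := by ring
          _ = (E/Real.sqrt 2*(E/Real.sqrt 2) *
                (Real.sqrt (2*(A+B+3)) * Real.sqrt (2*((A+1)*(B+1))))) *
              ((A+2)^(b+1) * (B+2)^(a+1) *
                (((A+B+3)/E)^(a+b+3) * ((((A+1)*(B+1)))/E)^((a+1)*(b+1))) *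
                (((A+1)/(A+2))^(b+2) * ((B+1)/(B+2))^(a+2)) * (A+2+(B+2))) := by rw [hww]
          _ ≤ (E^2*Real.sqrt π*Real.sqrt (2*((A+2)*(B+2)))*Real.sqrt (A+2+(B+2))) *
              (E^2 * ((((A+1)/(A+2))^((a+2)*(b+2)) * ((A+2+(B+2))/(A+2))^(a+2) *
                ((B+1)/(B+2))^((a+2)*(b+2)) * ((A+2+(B+2))/(B+2))^(b+2)) *
                (((A+2)*(B+2))/E)^((a+2)*(b+2)))) :=
              mul_le_mul hsqrt hpow (by positivity) (by positivity)
          _ = (E^4 * (((A+1)/(A+2))^((a+2)*(b+2)) * ((A+2+(B+2))/(A+2))^(a+2) *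
                ((B+1)/(B+2))^((a+2)*(b+2)) * ((A+2+(B+2))/(B+2))^(b+2)) *
              (Real.sqrt π * (Real.sqrt (2*((A+2)*(B+2))) * (((A+2)*(B+2))/E)^((a+2)*(b+2))))) *
              Real.sqrt (A+2+(B+2)) := by ring
    _ ≤ E^4 * (((A+1)/(A+2))^((a+2)*(b+2)) * ((A+2+(B+2))/(A+2))^(a+2) *
          ((B+1)/(B+2))^((a+2)*(b+2)) * ((A+2+(B+2))/(B+2))^(b+2)) *
        (Nat.factorial ((a+2)*(b+2)) : ℝ) := by
        exact mul_le_mul_of_nonneg_left hNl (by positivity)
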